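/- Let R be a commutative Noetherian ring of prime characteristic p whose Frobenius endomorphism is finite and flat, let a be an ideal of R, and let m be a positive integer. Then for every real number c ≥ 0 one has τ((a^m)^c) = τ(a^{c m}). -/

import Mathlib

open Ideal

/-- The `q`-th bracket power `J^{[q]}` of an ideal: the ideal generated by
the `q`-th powers of the elements of `J`. -/
def bracketPow {R : Type*} [CommRing R] (J : Ideal R) (q : ℕ) : Ideal R :=
  Ideal.span ((fun x => x ^ q) '' (J : Set R))

/-- The ideal `b^{[1/q]}`: the smallest ideal `J` with `b ⊆ J^{[q]}`
(realized as the intersection of all such ideals). -/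
def frobRoot {R : Type*} [CommRing R] (b : Ideal R) (q : ℕ) : Ideal R :=
  sInf {J : Ideal R | b ≤ bracketPow J q}

/-- The generalized test ideal `τ(a^c) = ⋃_{e ≥ 1} (a^{⌈c p^e⌉})^{[1/p^e]}`. -/
noncomputable def testIdeal {R : Type*} [CommRing R] (p : ℕ) (a : Ideal R) (c : ℝ) : Ideal R :=
  ⨆ e : ℕ, frobRoot (a ^ ⌈c * (p : ℝ) ^ (e + 1)⌉₊) (p ^ (e + 1))

/-- `ν_a^J(q)`: the largest nonnegative integer `r` with `a^r ⊄ J^{[q]}`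
(and `0` if there is no such `r`). -/
noncomputable def nuF {R : Type*} [CommRing R] (a J : Ideal R) (q : ℕ) : ℕ :=
  sSup {r : ℕ | ¬ a ^ r ≤ bracketPow J q}

/-- The F-threshold `c^J(a) = sup_{e ≥ 1} ν_a^J(p^e)/p^e`. -/
noncomputable def FThreshold {R : Type*} [CommRing R] (p : ℕ) (a J : Ideal R) : ℝ :=
  ⨆ e : ℕ, (nuF a J (p ^ (e + 1)) : ℝ) / (p : ℝ) ^ (e + 1)

/-- `α > 0` is an F-jumping exponent of `a` if `τ(a^α) ≠ τ(a^c)` for all `0 ≤ c < α`. -/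
def IsFJumpingExponent {R : Type*} [CommRing R] (p : ℕ) (a : Ideal R) (α : ℝ) : Prop :=
  0 < α ∧ ∀ c : ℝ, 0 ≤ c → c < α → testIdeal p a c ≠ testIdeal p a α

namespace Stmt8Aux

variable {R : Type*} [CommRing R]

/-- Monotonicity of bracket powers in the ideal. -/
lemma bracketPow_mono {I J : Ideal R} (h : I ≤ J) (q : ℕ) :
    bracketPow I q ≤ bracketPow J q :=
  Ideal.span_mono (Set.image_mono h)

/-- The bracket power is contained in the ordinary power. -/
lemma bracketPow_le_pow (I : Ideal R) (n : ℕ) : bracketPow I n ≤ I ^ n := by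
  rw [bracketPow, Ideal.span_le]
  rintro _ ⟨y, hy, rfl⟩
  exact Ideal.pow_mem_pow hy n

section CharP

variable (p : ℕ) [Fact p.Prime] [CharP R p]

lemma bracketPow_eq_map (J : Ideal R) (e : ℕ) :
    bracketPow J (p ^ e) = J.map (iterateFrobenius R p e) := by
  have h : ⇑(iterateFrobenius R p e) = fun x : R => x ^ p ^ e := by
    funext x; exact iterateFrobenius_def p e x
  rw [Ideal.map, h, bracketPow]

lemma bracketPow_bracketPow (J : Ideal R) (a b : ℕ) :
    bracketPow (bracketPow J (p ^ a)) (p ^ b) = bracketPow J (p ^ (b + a)) := by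
  rw [bracketPow_eq_map, bracketPow_eq_map, bracketPow_eq_map, Ideal.map_map,
    ← iterateFrobenius_add]

end CharP

/-- A "dual basis/coordinates" description of `q`-th powers coming from projectivity of
the Frobenius. -/
structure FCo (R : Type*) [CommRing R] (q : ℕ) where
  co : R → (R →₀ R)
  co_add : ∀ x y : R, co (x + y) = co x + co y
  co_pmul : ∀ r x : R, co (r ^ q * x) = r • co x
  co_repr : ∀ x : R, ((co x).sum fun i cc => cc ^ q * i) = x

namespace FCo

variable {q : ℕ}

/-- `co` as an additive monoid hom. -/
noncomputable def hom (F : FCo R q) : R →+ (R →₀ R) := AddMonoidHom.mk' F.co F.co_add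

lemma mem_bracketPow_iff (F : FCo R q) (J : Ideal R) (x : R) :
    x ∈ bracketPow J q ↔ ∀ i, F.co x i ∈ J := by
  constructor
  · intro hx
    rw [bracketPow] at hx
    obtain ⟨l, hsupp, hsum⟩ := Submodule.mem_span_set.mp hx
    intro i
    have hx2 : F.co x = ∑ u ∈ l.support, F.co (l u • u) := by
      conv_lhs => rw [← hsum, Finsupp.sum]
      exact map_sum F.hom (fun u => l u • u) l.support
    rw [hx2, Finsupp.finset_sum_apply]
    refine Ideal.sum_mem _ fun u hu => ?_
    obtain ⟨j, hjJ, rfl⟩ := hsupp hu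
    have h1 : l (j ^ q) • (j ^ q) = j ^ q * l (j ^ q) := by rw [smul_eq_mul, mul_comm]
    rw [h1, F.co_pmul, Finsupp.smul_apply, smul_eq_mul]
    exact Ideal.mul_mem_right _ _ hjJ
  · intro h
    rw [← F.co_repr x, Finsupp.sum]
    refine Ideal.sum_mem _ fun i _ => ?_
    refine Ideal.mul_mem_right _ _ ?_
    exact Ideal.subset_span ⟨F.co x i, h i, rfl⟩

/-- Attainment: `b ⊆ (b^{[1/q]})^{[q]}`. -/
lemma le_bracketPow_frobRoot (F : FCo R q) (b : Ideal R) :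
    b ≤ bracketPow (frobRoot b q) q := by
  intro x hx
  rw [F.mem_bracketPow_iff]
  intro i
  rw [frobRoot]
  rw [Submodule.mem_sInf]
  intro J hJ
  exact (F.mem_bracketPow_iff J x).mp (hJ hx) i

/-- Colon lemma: if `w·z^q ∈ K^{[q]}` then `w ∈ (K : z)^{[q]}`. -/
lemma colon_of_mul_mem (F : FCo R q) (K : Ideal R) (z w : R)
    (h : w * z ^ q ∈ bracketPow K q) :
    w ∈ bracketPow (K.colon (Ideal.span {z})) q := by
  rw [F.mem_bracketPow_iff] at h ⊢
  intro i
  rw [Ideal.mem_colon_span_singleton]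
  have h4 : F.co (w * z ^ q) i = z * F.co w i := by
    rw [mul_comm, F.co_pmul, Finsupp.smul_apply, smul_eq_mul]
  have h5 := h i
  rw [h4] at h5
  rwa [mul_comm] at h5

/-- Reducedness kernel: if `x^q = 0` then `x = 0`. -/
lemma pow_q_eq_zero (F : FCo R q) (hq : 1 ≤ q) (x : R) (hx : x ^ q = 0) : x = 0 := by
  have h0 : F.co 0 = 0 := by
    have h := F.co_add 0 0
    rw [add_zero] at h
    exact add_eq_left.mp h.symm
  have h1 : ∀ y : R, ∀ i, x * F.co y i = 0 := by
    intro y i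
    have h2 : F.co (x ^ q * y) = x • F.co y := F.co_pmul x y
    rw [hx, zero_mul, h0] at h2
    have h3 := congrArg (fun v : R →₀ R => v i) h2
    simp only [Finsupp.coe_zero, Pi.zero_apply, Finsupp.smul_apply, smul_eq_mul] at h3
    exact h3.symm
  have hrepr := F.co_repr 1
  calc x = x * 1 := (mul_one x).symm
    _ = x * ((F.co 1).sum fun i cc => cc ^ q * i) := by rw [hrepr]
    _ = (F.co 1).sum fun i cc => x * (cc ^ q * i) := by rw [Finsupp.mul_sum]
    _ = 0 := by
        rw [Finsupp.sum]
        refine Finset.sum_eq_zero fun i _ => ?_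
        have hq' : q = 1 + (q - 1) := by omega
        calc x * (F.co 1 i ^ q * i)
            = x * (F.co 1 i ^ (1 + (q - 1)) * i) := by rw [← hq']
          _ = (x * F.co 1 i) * (F.co 1 i ^ (q - 1) * i) := by rw [pow_add, pow_one]; ring
          _ = 0 := by rw [h1 1 i, zero_mul]

end FCo

/-- Coordinates exist for a finite flat ring hom over a Noetherian ring. -/
theorem exists_coords_of_finite_flat {R S : Type*} [CommRing R] [CommRing S] [IsNoetherianRing R]
    (f : R →+* S) (hfin : f.Finite) (hflat : f.Flat) :
    ∃ co : S → (S →₀ R), (∀ x y, co (x + y) = co x + co y) ∧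
      (∀ r x, co (f r * x) = r • co x) ∧
      (∀ x, ((co x).sum fun i cc => f cc * i) = x) := by
  algebraize [f]
  haveI : Module.FinitePresentation R S := Module.finitePresentation_of_finite R S
  haveI hproj : Module.Projective R S := Module.freeLocus_eq_univ_iff.mp Module.freeLocus_eq_univ
  obtain ⟨s, hs⟩ := Module.projective_def.mp hproj
  refine ⟨fun x => s x, fun x y => map_add s x y, fun r x => ?_, fun x => ?_⟩
  · have h1 : f r * x = r • x := (Algebra.smul_def r x).symm
    rw [h1]; exact s.map_smul r x
  · have h2 := hs x
    rw [Finsupp.linearCombination_apply] at h2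
    calc ((s x).sum fun i cc => f cc * i) = (s x).sum fun i a => a • id i :=
          Finsupp.sum_congr fun i _ => by rw [Algebra.smul_def]; rfl
      _ = x := h2

section Main

variable (p : ℕ) [Fact p.Prime] [CharP R p] [IsNoetherianRing R]

lemma exists_fco (hfin : (frobenius R p).Finite) (hflat : (frobenius R p).Flat) (e : ℕ) :
    Nonempty (FCo R (p ^ e)) := by
  have hflat' : (iterateFrobenius R p e).Flat := by
    induction e with
    | zero =>
      rw [iterateFrobenius_zero, ← RingHom.one_def]
      exact RingHom.Flat.id R
    | succ n ih =>
      rw [show n + 1 = 1 + n from by omega, iterateFrobenius_add, iterateFrobenius_one]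
      haveI := ih
      haveI := hflat
      exact RingHom.Flat.comp ih hflat
  have hfin' : (iterateFrobenius R p e).Finite := by
    clear hflat'
    induction e with
    | zero => rw [iterateFrobenius_zero]; exact RingHom.Finite.id R
    | succ n ih =>
      rw [show n + 1 = 1 + n from by omega, iterateFrobenius_add, iterateFrobenius_one]
      exact RingHom.Finite.comp hfin ih
  obtain ⟨co, hadd, hpmul, hrepr⟩ := exists_coords_of_finite_flat _ hfin' hflat'
  exact ⟨⟨co, hadd, fun r x => hpmul r x, fun x => hrepr x⟩⟩

/-- The key "tight-closure style" lemma. -/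
theorem tc_lemma (Fc : ∀ t : ℕ, FCo R (p ^ t)) (hred : ∀ x : R, x ^ p = 0 → x = 0)
    (K : Ideal R) (z : R) (m : ℕ) (hm : 1 ≤ m)
    (H : ∀ t : ℕ, z ^ (m - 1 + p ^ t) ∈ bracketPow K (p ^ t)) : z ∈ K := by
  have hp1 : 1 < p := (Fact.out : p.Prime).one_lt
  set c := K.colon (Ideal.span {z}) with hc
  -- kill nilpotents
  have hnil : ∀ n : ℕ, 1 ≤ n → ∀ x : R, x ^ n = 0 → x = 0 := by
    have key : ∀ k : ℕ, ∀ y : R, y ^ p ^ k = 0 → y = 0 := by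
      intro k
      induction k with
      | zero => intro y hy; simpa using hy
      | succ k ih =>
        intro y hy
        apply ih
        apply hred
        rw [← pow_mul, ← pow_succ]
        exact hy
    intro n hn x hxn
    apply key n
    have h : p ^ n = n + (p ^ n - n) := by
      have := Nat.lt_pow_self (n := n) hp1
      omega
    rw [h, pow_add, hxn, zero_mul]
  have h1 : ∀ t : ℕ, z ^ (m - 1) ∈ c ^ (p ^ t) := by
    intro t
    have h := H t
    rw [pow_add] at h
    exact bracketPow_le_pow _ _ ((Fc t).colon_of_mul_mem K z (z ^ (m - 1)) h)
  have h2 : z ^ (m - 1) ∈ ⨅ i : ℕ, (c ^ i • ⊤ : Submodule R R) := by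
    rw [Submodule.mem_iInf]
    intro i
    have hle : c ^ (p ^ i) ≤ c ^ i :=
      Ideal.pow_le_pow_right (le_of_lt (Nat.lt_pow_self (n := i) hp1))
    have hmem := hle (h1 i)
    have := Submodule.smul_mem_smul hmem (Submodule.mem_top (x := (1 : R)))
    simpa using this
  obtain ⟨r, hr⟩ := (Ideal.mem_iInf_smul_pow_eq_bot_iff c (z ^ (m - 1))).mp h2
  rw [smul_eq_mul] at hr
  by_cases hm1 : m = 1
  · subst hm1
    simp only [Nat.sub_self, pow_zero, mul_one] at hr
    have h1c : (1 : R) ∈ c := hr ▸ r.2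
    have := Ideal.mem_colon_span_singleton.mp h1c
    rwa [one_mul] at this
  · have hm2 : 2 ≤ m := by omega
    have hw0 : (1 - (r : R)) * z ^ (m - 1) = 0 := by
      rw [sub_mul, one_mul, hr, sub_self]
    have hwn : ((1 - (r : R)) * z) ^ (m - 1) = 0 := by
      have h3 : m - 1 = (m - 2) + 1 := by omega
      calc ((1 - (r : R)) * z) ^ (m - 1) = (1 - (r : R)) ^ (m - 1) * z ^ (m - 1) :=
            mul_pow _ _ _
        _ = (1 - (r : R)) ^ (m - 2) * ((1 - (r : R)) * z ^ (m - 1)) := by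
            rw [h3, pow_succ]; ring
        _ = 0 := by rw [hw0, mul_zero]
    have hw : (1 - (r : R)) * z = 0 := hnil (m - 1) (by omega) _ hwn
    have hz : z = (r : R) * z := by
      have h4 : z - (r : R) * z = 0 := by rw [← hw]; ring
      have := sub_eq_zero.mp h4
      exact this
    rw [hz]
    exact Ideal.mem_colon_span_singleton.mp r.2

/-- Arithmetic: the key exponent inequality for the hard direction. -/
lemma arith_hard (hp1 : 1 < p) (m : ℕ) (hm : 1 ≤ m) (c : ℝ) (hc : 0 ≤ c) (e t : ℕ) :
    m * ⌈c * (p : ℝ) ^ ((e + t) + 1)⌉₊ ≤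
      ⌈(c * m) * (p : ℝ) ^ (e + 1)⌉₊ * (m - 1 + p ^ t) := by
  rcases eq_or_lt_of_le hc with h0 | hcpos
  · rw [← h0]
    simp
  · set B := ⌈(c * m) * (p : ℝ) ^ (e + 1)⌉₊ with hB
    have hppos : (0 : ℝ) < (p : ℝ) := by
      have : (1 : ℝ) < (p : ℝ) := by exact_mod_cast hp1
      linarith
    have hmpos : (0 : ℝ) < (m : ℝ) := by exact_mod_cast hm
    have hBpos : 1 ≤ B := by
      rw [hB]
      apply Nat.one_le_iff_ne_zero.mpr
      apply Nat.ceil_pos.mp ?_ |>.ne'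
      · positivity
    -- real inequality
    have hcast : ((m - 1 + p ^ t : ℕ) : ℝ) = (m : ℝ) - 1 + (p : ℝ) ^ t := by
      push_cast [hm]
      ring
    have key : (↑(m * ⌈c * (p : ℝ) ^ ((e + t) + 1)⌉₊) : ℝ) <
        (↑(B * (m - 1 + p ^ t)) : ℝ) + 1 := by
      push_cast [hm]
      have hEQ : (p : ℝ) ^ ((e + t) + 1) = (p : ℝ) ^ (e + 1) * (p : ℝ) ^ t := by
        rw [← pow_add]
        congr 1
        omega
      have s1 : (⌈c * (p : ℝ) ^ ((e + t) + 1)⌉₊ : ℝ) < c * (p : ℝ) ^ ((e + t) + 1) + 1 :=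
        Nat.ceil_lt_add_one (by positivity)
      have s2 : (m : ℝ) * (⌈c * (p : ℝ) ^ ((e + t) + 1)⌉₊ : ℝ) <
          (m : ℝ) * (c * (p : ℝ) ^ ((e + t) + 1)) + (m : ℝ) := by
        nlinarith [s1, hmpos]
      have s3 : (m : ℝ) * (c * (p : ℝ) ^ ((e + t) + 1)) ≤ (B : ℝ) * (p : ℝ) ^ t := by
        rw [hEQ]
        have := Nat.le_ceil ((c * m) * (p : ℝ) ^ (e + 1))
        have hpt : (0 : ℝ) < (p : ℝ) ^ t := by positivity
        nlinarith [this, hpt]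
      have s4 : (m : ℝ) ≤ (B : ℝ) * ((m : ℝ) - 1) + 1 := by
        have hB1 : (1 : ℝ) ≤ (B : ℝ) := by exact_mod_cast hBpos
        have hm1 : (1 : ℝ) ≤ (m : ℝ) := by exact_mod_cast hm
        nlinarith [mul_nonneg (sub_nonneg.mpr hB1) (sub_nonneg.mpr hm1)]
      nlinarith [s2, s3, s4]
    have := key
    rw [show ((↑(B * (m - 1 + p ^ t)) : ℝ) + 1) = ((B * (m - 1 + p ^ t) + 1 : ℕ) : ℝ) by
      push_cast; ring] at this
    have hlt : m * ⌈c * (p : ℝ) ^ ((e + t) + 1)⌉₊ < B * (m - 1 + p ^ t) + 1 := by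
      exact_mod_cast this
    omega

/-- Arithmetic for the easy direction. -/
lemma arith_easy (m : ℕ) (c : ℝ) (hc : 0 ≤ c) (x : ℝ) (hx : 0 ≤ x) :
    ⌈(c * m) * x⌉₊ ≤ m * ⌈c * x⌉₊ := by
  apply Nat.ceil_le.mpr
  push_cast
  calc c * m * x = m * (c * x) := by ring
    _ ≤ m * (⌈c * x⌉₊ : ℝ) := by
        have := Nat.le_ceil (c * x)
        have hm0 : (0 : ℝ) ≤ (m : ℝ) := by positivity
        nlinarith [this, hm0]

end Main

end Stmt8Aux

open Stmt8Aux

/-- `τ((a^m)^c) = τ(a^{cm})`. -/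
theorem stmt8_testIdeal_pow
    {R : Type*} [CommRing R] [IsNoetherianRing R] (p : ℕ) [Fact p.Prime] [CharP R p]
    (hfin : (frobenius R p).Finite) (hflat : (frobenius R p).Flat)
    (a : Ideal R) (m : ℕ) (hm : 1 ≤ m) (c : ℝ) (hc : 0 ≤ c) :
    testIdeal p (a ^ m) c = testIdeal p a (c * m) := by
  classical
  have hp1 : 1 < p := (Fact.out : p.Prime).one_lt
  have Fc : ∀ t : ℕ, FCo R (p ^ t) := fun t => (exists_fco p hfin hflat t).some
  have hred : ∀ x : R, x ^ p = 0 → x = 0 := by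
    intro x hx
    refine (Fc 1).pow_q_eq_zero ?_ x ?_
    · exact Nat.one_le_iff_ne_zero.mpr (pow_ne_zero 1 (by omega))
    · rw [pow_one]; exact hx
  apply le_antisymm
  · -- τ((a^m)^c) ≤ τ(a^{cm})
    rw [testIdeal]
    refine iSup_le fun E => ?_
    refine sInf_le ?_
    show (a ^ m) ^ ⌈c * (p : ℝ) ^ (E + 1)⌉₊ ≤
      bracketPow (testIdeal p a (c * m)) (p ^ (E + 1))
    rw [← pow_mul]
    have hle1 : ⌈(c * m) * (p : ℝ) ^ (E + 1)⌉₊ ≤ m * ⌈c * (p : ℝ) ^ (E + 1)⌉₊ :=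
      arith_easy m c hc _ (by positivity)
    calc a ^ (m * ⌈c * (p : ℝ) ^ (E + 1)⌉₊)
        ≤ a ^ ⌈(c * m) * (p : ℝ) ^ (E + 1)⌉₊ := Ideal.pow_le_pow_right hle1
      _ ≤ bracketPow (frobRoot (a ^ ⌈(c * m) * (p : ℝ) ^ (E + 1)⌉₊) (p ^ (E + 1)))
            (p ^ (E + 1)) := (Fc (E + 1)).le_bracketPow_frobRoot _
      _ ≤ bracketPow (testIdeal p a (c * m)) (p ^ (E + 1)) := by
          apply bracketPow_mono
          rw [testIdeal]
          exact le_iSup (fun e => frobRoot (a ^ ⌈(c * m) * (p : ℝ) ^ (e + 1)⌉₊) (p ^ (e + 1))) E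
  · -- τ(a^{cm}) ≤ τ((a^m)^c)
    conv_lhs => rw [testIdeal]
    refine iSup_le fun e => ?_
    refine sInf_le ?_
    show a ^ ⌈(c * m) * (p : ℝ) ^ (e + 1)⌉₊ ≤
      bracketPow (testIdeal p (a ^ m) c) (p ^ (e + 1))
    intro z hz
    set W := testIdeal p (a ^ m) c with hW
    set B := ⌈(c * m) * (p : ℝ) ^ (e + 1)⌉₊ with hB
    apply tc_lemma p Fc hred (bracketPow W (p ^ (e + 1))) z m hm
    intro t
    rw [bracketPow_bracketPow]
    -- goal: z ^ (m - 1 + p^t) ∈ bracketPow W (p ^ (t + (e+1)))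
    have hE : t + (e + 1) = (e + t) + 1 := by omega
    rw [hE]
    have hz2 : z ^ (m - 1 + p ^ t) ∈ a ^ (B * (m - 1 + p ^ t)) := by
      rw [pow_mul]
      exact Ideal.pow_mem_pow hz _
    have harith : m * ⌈c * (p : ℝ) ^ ((e + t) + 1)⌉₊ ≤ B * (m - 1 + p ^ t) :=
      arith_hard p hp1 m hm c hc e t
    have hz3 : z ^ (m - 1 + p ^ t) ∈ a ^ (m * ⌈c * (p : ℝ) ^ ((e + t) + 1)⌉₊) :=
      Ideal.pow_le_pow_right harith hz2
    have hz4 : z ^ (m - 1 + p ^ t) ∈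
        bracketPow (frobRoot ((a ^ m) ^ ⌈c * (p : ℝ) ^ ((e + t) + 1)⌉₊) (p ^ ((e + t) + 1)))
          (p ^ ((e + t) + 1)) := by
      apply (Fc ((e + t) + 1)).le_bracketPow_frobRoot ((a ^ m) ^ ⌈c * (p : ℝ) ^ ((e + t) + 1)⌉₊)
      rw [← pow_mul]
      exact hz3
    refine bracketPow_mono ?_ _ hz4
    rw [hW, testIdeal]
    exact le_iSup (fun E => frobRoot ((a ^ m) ^ ⌈c * (p : ℝ) ^ (E + 1)⌉₊) (p ^ (E + 1))) (e + t)
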